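/- A Banach space X is weakly octahedral if and only if for every finite-dimensional subspace E of X, every x* ∈ B_{X*}, and every ε > 0, there exist y ∈ S_X and x₁*, x₂* ∈ X* with ‖x₁*‖, ‖x₂*‖ ≤ 1 + ε, x₁*|_E = x₂*|_E = x*|_E, and x₁*(y) − x₂*(y) > 2 − ε. -/

import Mathlib

open Filter Topology

noncomputable section

/-- A Banach space is octahedral (OH). -/
def IsOctahedral (Z : Type*) [NormedAddCommGroup Z] : Prop :=
  ∀ (n : ℕ) (z : Fin n → Z), (∀ i, ‖z i‖ = 1) → ∀ ε : ℝ, 0 < ε →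
    ∃ w : Z, ‖w‖ = 1 ∧ ∀ i, ‖z i + w‖ > 2 - ε

/-- Locally octahedral (LOH). -/
def IsLocallyOctahedral (Z : Type*) [NormedAddCommGroup Z] : Prop :=
  ∀ z : Z, ‖z‖ = 1 → ∀ ε : ℝ, 0 < ε →
    ∃ w : Z, ‖w‖ = 1 ∧ ‖z + w‖ > 2 - ε ∧ ‖z - w‖ > 2 - ε

/-- Weakly octahedral (WOH). -/
def IsWeaklyOctahedral (X : Type*) [NormedAddCommGroup X] [NormedSpace ℝ X] : Prop :=
  ∀ (n : ℕ) (z : Fin n → X), (∀ i, ‖z i‖ = 1) → ∀ f : X →L[ℝ] ℝ, ‖f‖ ≤ 1 →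
    ∀ ε : ℝ, 0 < ε → ∃ y : X, ‖y‖ = 1 ∧ ∀ i, ∀ t : ℝ, 0 < t →
      ‖z i + t • y‖ ≥ (1 - ε) * (|f (z i)| + t) ∧
      ‖z i - t • y‖ ≥ (1 - ε) * (|f (z i)| + t)

/-- Almost square (ASQ), sequential formulation. -/
def IsASQ (Z : Type*) [NormedAddCommGroup Z] : Prop :=
  ∀ (n : ℕ) (z : Fin n → Z), (∀ i, ‖z i‖ = 1) →
    ∃ w : ℕ → Z, (∀ k, ‖w k‖ ≤ 1) ∧
      Tendsto (fun k => ‖w k‖) atTop (nhds 1) ∧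
      ∀ i, Tendsto (fun k => ‖z i + w k‖) atTop (nhds 1) ∧
           Tendsto (fun k => ‖z i - w k‖) atTop (nhds 1)

/-- Almost square (ASQ), finite-ε formulation. -/
def IsASQeps (Z : Type*) [NormedAddCommGroup Z] : Prop :=
  ∀ (n : ℕ) (z : Fin n → Z), (∀ i, ‖z i‖ = 1) → ∀ ε : ℝ, 0 < ε →
    ∃ w : Z, ‖w‖ = 1 ∧ ∀ i, ‖z i + w‖ ≤ 1 + ε ∧ ‖z i - w‖ ≤ 1 + ε

/-- Locally almost square (LASQ), sequential formulation. -/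
def IsLASQ (Z : Type*) [NormedAddCommGroup Z] : Prop :=
  ∀ z : Z, ‖z‖ = 1 →
    ∃ w : ℕ → Z, (∀ k, ‖w k‖ ≤ 1) ∧
      Tendsto (fun k => ‖w k‖) atTop (nhds 1) ∧
      Tendsto (fun k => ‖z + w k‖) atTop (nhds 1) ∧
      Tendsto (fun k => ‖z - w k‖) atTop (nhds 1)

/-- Locally almost square (LASQ), ε formulation. -/
def IsLASQeps (Z : Type*) [NormedAddCommGroup Z] : Prop :=
  ∀ z : Z, ‖z‖ = 1 → ∀ ε : ℝ, 0 < ε →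
    ∃ w : Z, ‖w‖ = 1 ∧ ‖z + w‖ ≤ 1 + ε ∧ ‖z - w‖ ≤ 1 + ε

/-- Weakly almost square (WASQ). -/
def IsWASQ (Z : Type*) [NormedAddCommGroup Z] [NormedSpace ℝ Z] : Prop :=
  ∀ z : Z, ‖z‖ = 1 →
    ∃ w : ℕ → Z, (∀ k, ‖w k‖ ≤ 1) ∧
      Tendsto (fun k => ‖w k‖) atTop (nhds 1) ∧
      Tendsto (fun k => ‖z + w k‖) atTop (nhds 1) ∧
      Tendsto (fun k => ‖z - w k‖) atTop (nhds 1) ∧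
      ∀ f : Z →L[ℝ] ℝ, Tendsto (fun k => f (w k)) atTop (nhds 0)

/-- Local diameter two property: every slice of the unit ball has diameter two. -/
def HasLD2P (Z : Type*) [NormedAddCommGroup Z] [NormedSpace ℝ Z] : Prop :=
  ∀ f : Z →L[ℝ] ℝ, ‖f‖ = 1 → ∀ α : ℝ, 0 < α →
    Metric.diam {x : Z | ‖x‖ ≤ 1 ∧ 1 - α < f x} = 2

/-- Diameter two property: every nonempty relatively weakly open subset of the unit
ball has diameter two. -/
def HasD2P (Z : Type*) [NormedAddCommGroup Z] [NormedSpace ℝ Z] : Prop :=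
  ∀ U : Set Z, U.Nonempty → (∀ x ∈ U, ‖x‖ ≤ 1) →
    (∀ x ∈ U, ∃ (n : ℕ) (f : Fin n → Z →L[ℝ] ℝ) (δ : ℝ), 0 < δ ∧
      {y : Z | ‖y‖ ≤ 1 ∧ ∀ i, |f i y - f i x| < δ} ⊆ U) →
    Metric.diam U = 2

/-- The Schur property. -/
def HasSchurProperty (Z : Type*) [SeminormedAddCommGroup Z] [NormedSpace ℝ Z] : Prop :=
  ∀ (u : ℕ → Z) (x : Z),
    (∀ f : Z →L[ℝ] ℝ, Tendsto (fun k => f (u k)) atTop (nhds (f x))) →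
    Tendsto (fun k => ‖u k - x‖) atTop (nhds 0)

/-- The Dunford–Pettis property: every weakly compact operator is
weak-to-norm sequentially continuous. -/
def HasDPP (X : Type*) [NormedAddCommGroup X] [NormedSpace ℝ X] : Prop :=
  ∀ (Y : Type) (_ : NormedAddCommGroup Y) (_ : NormedSpace ℝ Y) (_ : CompleteSpace Y)
    (T : X →L[ℝ] Y),
    (∃ K : Set (WeakSpace ℝ Y), IsCompact K ∧
      ∀ x : X, ‖x‖ ≤ 1 → toWeakSpace ℝ Y (T x) ∈ K) →
    ∀ (u : ℕ → X) (x : X),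
      (∀ f : X →L[ℝ] ℝ, Tendsto (fun k => f (u k)) atTop (nhds (f x))) →
      Tendsto (fun k => ‖T (u k) - T x‖) atTop (nhds 0)

/-- `Z`, together with the bilinear-type map `t`, is (a realization of) the injective
tensor product `X ⊗̂_ε Y`: the span of elementary tensors is dense and the norm of any
linear combination of elementary tensors is given by the injective tensor norm. -/
def IsInjTensorProduct (X Y Z : Type*) [NormedAddCommGroup X] [NormedSpace ℝ X]
    [NormedAddCommGroup Y] [NormedSpace ℝ Y] [NormedAddCommGroup Z] [NormedSpace ℝ Z]
    (t : X → Y → Z) : Prop :=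
  (Submodule.span ℝ (Set.range fun p : X × Y => t p.1 p.2)).topologicalClosure = ⊤ ∧
  ∀ l : List (X × Y),
    ‖(l.map fun p => t p.1 p.2).sum‖ =
      sSup {s : ℝ | ∃ (f : X →L[ℝ] ℝ) (g : Y →L[ℝ] ℝ), ‖f‖ ≤ 1 ∧ ‖g‖ ≤ 1 ∧
        s = |(l.map fun p => f p.1 * g p.2).sum|}

/-- `Z`, together with the map `t`, is (a realization of) the projective tensor product
`X ⊗̂_π Y`: the span of elementary tensors is dense and the norm of any combination of
elementary tensors is the infimum of `Σ ‖xᵢ‖‖yᵢ‖` over all representations (two formal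
combinations represent the same tensor iff they agree against all pairs of functionals). -/
def IsProjTensorProduct (X Y Z : Type*) [NormedAddCommGroup X] [NormedSpace ℝ X]
    [NormedAddCommGroup Y] [NormedSpace ℝ Y] [NormedAddCommGroup Z] [NormedSpace ℝ Z]
    (t : X → Y → Z) : Prop :=
  (Submodule.span ℝ (Set.range fun p : X × Y => t p.1 p.2)).topologicalClosure = ⊤ ∧
  ∀ l : List (X × Y),
    ‖(l.map fun p => t p.1 p.2).sum‖ =
      sInf {s : ℝ | ∃ l' : List (X × Y),
        (∀ (f : X →L[ℝ] ℝ) (g : Y →L[ℝ] ℝ),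
          (l'.map fun p => f p.1 * g p.2).sum = (l.map fun p => f p.1 * g p.2).sum) ∧
        s = (l'.map fun p => ‖p.1‖ * ‖p.2‖).sum}

/-- `Z`, together with the diagonal map `δ : x ↦ x^N`, is (a realization of) the `N`-fold
injective symmetric tensor product `⊗̂_{ε,s,N} X`. -/
def IsInjSymTensorProduct (X : Type*) [NormedAddCommGroup X] [NormedSpace ℝ X] (N : ℕ)
    (Z : Type*) [NormedAddCommGroup Z] [NormedSpace ℝ Z] (δ : X → Z) : Prop :=
  (Submodule.span ℝ (Set.range δ)).topologicalClosure = ⊤ ∧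
  ∀ l : List (ℝ × X),
    ‖(l.map fun p => p.1 • δ p.2).sum‖ =
      sSup {s : ℝ | ∃ f : X →L[ℝ] ℝ, ‖f‖ ≤ 1 ∧
        s = |(l.map fun p => p.1 * (f p.2) ^ N).sum|}

/-- `Z`, together with the diagonal map `δ : x ↦ x^N`, is (a realization of) the `N`-fold
projective symmetric tensor product `⊗̂_{π,s,N} X`. -/
def IsProjSymTensorProduct (X : Type*) [NormedAddCommGroup X] [NormedSpace ℝ X] (N : ℕ)
    (Z : Type*) [NormedAddCommGroup Z] [NormedSpace ℝ Z] (δ : X → Z) : Prop :=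
  (Submodule.span ℝ (Set.range δ)).topologicalClosure = ⊤ ∧
  ∀ l : List (ℝ × X),
    ‖(l.map fun p => p.1 • δ p.2).sum‖ =
      sInf {s : ℝ | ∃ l' : List (ℝ × X),
        (∀ f : X →L[ℝ] ℝ,
          (l'.map fun p => p.1 * (f p.2) ^ N).sum = (l.map fun p => p.1 * (f p.2) ^ N).sum) ∧
        s = (l'.map fun p => |p.1| * ‖p.2‖ ^ N).sum}

/-- An operator `T : X* → Y` is weak*-to-weakly continuous. -/
def WeakStarToWeakContinuous {X Y : Type*} [NormedAddCommGroup X] [NormedSpace ℝ X]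
    [NormedAddCommGroup Y] [NormedSpace ℝ Y] (T : (X →L[ℝ] ℝ) →L[ℝ] Y) : Prop :=
  ∀ g : Y →L[ℝ] ℝ, Continuous fun f : WeakDual ℝ X => g (T f)

/-- The elementary tensor `x ⊗ y` regarded as the operator `x* ↦ x*(x) • y` in `L(X*, Y)`. -/
def elemTensor {X Y : Type*} [NormedAddCommGroup X] [NormedSpace ℝ X]
    [NormedAddCommGroup Y] [NormedSpace ℝ Y] (x : X) (y : Y) : (X →L[ℝ] ℝ) →L[ℝ] Y :=
  (ContinuousLinearMap.apply ℝ ℝ x).smulRight y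

/-- `n(Z, u) = 1`, i.e. `D(Z,u) = {f ∈ B_{Z*} : f(u) = 1}` is a norming set for `Z`. -/
def NormOneUnitary (Z : Type*) [NormedAddCommGroup Z] [NormedSpace ℝ Z] (u : Z) : Prop :=
  ‖u‖ = 1 ∧ ∀ z : Z, ‖z‖ ≤ sSup {r : ℝ | ∃ g : Z →L[ℝ] ℝ, ‖g‖ ≤ 1 ∧ g u = 1 ∧ r = |g z|}

/-- Asplund space: every closed separable subspace has separable dual. -/
def IsAsplund (Y : Type*) [NormedAddCommGroup Y] [NormedSpace ℝ Y] : Prop :=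
  ∀ S : Submodule ℝ Y, IsClosed (S : Set Y) → TopologicalSpace.SeparableSpace S →
    TopologicalSpace.SeparableSpace ((↥S) →L[ℝ] ℝ)

/-- The (metric) approximation-type property: finite-rank operators approximate the
identity uniformly on compact sets. -/
def HasAP (E : Type*) [NormedAddCommGroup E] [NormedSpace ℝ E] : Prop :=
  ∀ K : Set E, IsCompact K → ∀ ε : ℝ, 0 < ε →
    ∃ T : E →L[ℝ] E, FiniteDimensional ℝ (LinearMap.range (T : E →ₗ[ℝ] E)) ∧
      ∀ x ∈ K, ‖T x - x‖ ≤ ε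

end

set_option maxHeartbeats 1000000 in
theorem woh_key {X : Type*} [NormedAddCommGroup X] [NormedSpace ℝ X]
    (hW : IsWeaklyOctahedral X) (E : Submodule ℝ X) [FiniteDimensional ℝ E]
    (f : X →L[ℝ] ℝ) (hf : ‖f‖ ≤ 1) (ε : ℝ) (hε : 0 < ε) :
    ∃ y : X, ‖y‖ = 1 ∧ ∀ e ∈ E, ∀ t : ℝ, |f e| + |t| ≤ (1 + ε) * ‖e + t • y‖ := by
  obtain ⟨m, hm, hmε, hm1⟩ : ∃ m : ℝ, 0 < m ∧ m ≤ ε ∧ m ≤ 1 :=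
    ⟨min ε 1, lt_min hε one_pos, min_le_left _ _, min_le_right _ _⟩
  set η := m / 8 with hη_def
  set δ := m / 64 with hδ_def
  have hη : 0 < η := by positivity
  have hδ : 0 < δ := by positivity
  -- finite δ-net of the unit sphere of E
  have hcomp : IsCompact (Metric.sphere (0 : E) 1) := isCompact_sphere 0 1
  obtain ⟨T, hTsub, hTfin, hTcov⟩ := totallyBounded_iff_subset.mp hcomp.totallyBounded
    {p | dist p.1 p.2 < δ} (Metric.dist_mem_uniformity hδ)
  obtain ⟨n, emb, hemb⟩ := hTfin.fin_embedding
  set z : Fin n → X := fun i => ((emb i : E) : X) with hz_def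
  have hz : ∀ i, ‖z i‖ = 1 := by
    intro i
    have hiT : (emb i) ∈ T := hemb ▸ Set.mem_range_self i
    have := hTsub hiT
    rw [mem_sphere_zero_iff_norm] at this
    simpa [hz_def] using this
  obtain ⟨y, hy1, hy⟩ := hW n z hz f hf η hη
  refine ⟨y, hy1, ?_⟩
  intro e he t
  rcases eq_or_ne e 0 with rfl | he0
  · have : ‖(0 : X) + t • y‖ = |t| := by simp [norm_smul, hy1]
    rw [this]
    simp only [map_zero, abs_zero, zero_add]
    nlinarith [abs_nonneg t]
  rcases eq_or_ne t 0 with rfl | ht0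
  · have h1 : |f e| ≤ ‖e‖ := by
      calc |f e| = ‖f e‖ := (Real.norm_eq_abs _).symm
        _ ≤ ‖f‖ * ‖e‖ := f.le_opNorm e
        _ ≤ 1 * ‖e‖ := by nlinarith [norm_nonneg e]
        _ = ‖e‖ := one_mul _
    have h2 : ‖e + (0:ℝ) • y‖ = ‖e‖ := by simp
    rw [h2]
    simp only [abs_zero, add_zero]
    nlinarith [norm_nonneg e]
  -- main case
  set r := ‖e‖ with hr_def
  have hr : 0 < r := norm_pos_iff.mpr he0
  set u : E := r⁻¹ • (⟨e, he⟩ : E) with hu_def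
  have hu1 : ‖u‖ = 1 := by
    rw [hu_def, norm_smul, Real.norm_eq_abs, abs_inv, abs_of_pos hr]
    have : ‖(⟨e, he⟩ : E)‖ = r := rfl
    rw [this, inv_mul_cancel₀ hr.ne']
  have husphere : u ∈ Metric.sphere (0 : E) 1 := by
    rwa [mem_sphere_zero_iff_norm]
  obtain ⟨v, hvT, hv⟩ := Set.mem_iUnion₂.mp (hTcov husphere)
  obtain ⟨i, rfl⟩ : ∃ i, emb i = v := by
    have : v ∈ Set.range emb := hemb ▸ hvT
    exact this
  have hdist : ‖(u : X) - z i‖ < δ := by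
    have : dist u (emb i) < δ := hv
    rw [dist_eq_norm] at this
    simpa [hz_def] using this
  have huX : (u : X) = r⁻¹ • e := rfl
  set s := |t| / r with hs_def
  have hs : 0 < s := by positivity
  have hkey : (1 - η) * (|f (z i)| + s) ≤ ‖z i + (t / r) • y‖ := by
    rcases lt_or_gt_of_ne ht0 with hneg | hpos
    · have ht : t / r = -s := by
        rw [hs_def, abs_of_neg hneg]; field_simp
      rw [ht, neg_smul, ← sub_eq_add_neg]
      exact (hy i s hs).2
    · have ht : t / r = s := by rw [hs_def, abs_of_pos hpos]
      rw [ht]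
      exact (hy i s hs).1
  -- |f (z i)| ≥ |f u| - δ
  have hfu : |f (u : X)| = r⁻¹ * |f e| := by
    rw [huX, map_smul]
    simp only [smul_eq_mul, abs_mul, abs_inv, abs_of_pos hr]
  have hfz : |f (u : X)| - δ ≤ |f (z i)| := by
    have h1 : |f (u : X) - f (z i)| ≤ δ := by
      have : f (u : X) - f (z i) = f ((u : X) - z i) := by rw [map_sub]
      rw [this]
      calc |f ((u : X) - z i)| ≤ ‖f‖ * ‖(u : X) - z i‖ := f.le_opNorm _
        _ ≤ 1 * δ := by
            apply mul_le_mul hf hdist.le (norm_nonneg _) zero_le_one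
        _ = δ := one_mul _
    have := abs_sub_abs_le_abs_sub (f (u : X)) (f (z i))
    linarith
  have hw : ‖(u : X) + (t / r) • y‖ ≥ (1 - η) * (|f (z i)| + s) - δ := by
    have h1 : ‖z i + (t / r) • y‖ - ‖z i - (u : X)‖ ≤ ‖(u : X) + (t / r) • y‖ := by
      have h2 : ‖z i + (t / r) • y‖ ≤ ‖(u : X) + (t / r) • y‖ + ‖z i - (u : X)‖ := by
        calc ‖z i + (t / r) • y‖ = ‖((u : X) + (t / r) • y) + (z i - (u : X))‖ := by congr 1; abel
          _ ≤ _ := norm_add_le _ _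
      linarith
    have h3 : ‖z i - (u : X)‖ < δ := by rwa [norm_sub_rev]
    linarith
  have hscale : ‖e + t • y‖ = r * ‖(u : X) + (t / r) • y‖ := by
    have h1 : e + t • y = r • ((u : X) + (t / r) • y) := by
      rw [huX, smul_add, smul_smul, smul_smul]
      rw [mul_inv_cancel₀ hr.ne', mul_div_cancel₀ _ hr.ne', one_smul]
    rw [h1, norm_smul, Real.norm_eq_abs, abs_of_pos hr]
  -- combine
  have hmain : (1 - η) * (|f e| + |t|) - 2 * δ * r ≤ ‖e + t • y‖ := by
    rw [hscale]
    have hchain : (1 - η) * (r⁻¹ * |f e| - δ + s) - δ ≤ ‖(u : X) + (t / r) • y‖ := by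
      have : (1 - η) * (r⁻¹ * |f e| - δ + s) ≤ (1 - η) * (|f (z i)| + s) := by
        apply mul_le_mul_of_nonneg_left _ (by nlinarith)
        linarith [hfz, hfu ▸ le_refl (|f (u:X)|), hfu]
      linarith [hw, this]
    have hη1 : η ≤ 1 := by simp only [hη_def]; linarith
    have hexp : r * ((1 - η) * (r⁻¹ * |f e| - δ + s) - δ)
        = (1 - η) * (|f e| + |t|) - (1 - η) * δ * r - δ * r := by
      rw [hs_def]; field_simp; ring
    have h4 : r * ((1 - η) * (r⁻¹ * |f e| - δ + s) - δ) ≤ r * ‖(u : X) + (t / r) • y‖ :=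
      mul_le_mul_of_nonneg_left hchain hr.le
    have h5 : 0 ≤ δ * r := by positivity
    have h6 : 0 ≤ η * (δ * r) := by positivity
    rw [hexp] at h4
    have h7 : (1 - η) * δ * r = δ * r - η * (δ * r) := by ring
    linarith
  set A := |f e| + |t| with hA_def
  have hApos : 0 < A := by
    have := abs_pos.mpr ht0
    have := abs_nonneg (f e)
    linarith
  clear_value A η δ r s u z
  rcases le_or_gt r (2 * A) with hr2 | hr2
  · -- r ≤ 2A
    have h8 : 2 * δ * r ≤ 2 * δ * (2 * A) :=
      mul_le_mul_of_nonneg_left hr2 (by positivity)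
    have h9 : (1 - η) * A - 2 * δ * (2 * A) = (1 - 3 * m / 16) * A := by
      rw [hη_def, hδ_def]; ring
    have hB : (1 - 3 * m / 16) * A ≤ ‖e + t • y‖ := by linarith
    have hscal : 1 ≤ (1 + ε) * (1 - 3 * m / 16) := by
      nlinarith [mul_nonneg hε.le (show (0:ℝ) ≤ 1 - m by linarith)]
    calc A = 1 * A := (one_mul A).symm
      _ ≤ ((1 + ε) * (1 - 3 * m / 16)) * A := mul_le_mul_of_nonneg_right hscal hApos.le
      _ = (1 + ε) * ((1 - 3 * m / 16) * A) := by ring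
      _ ≤ (1 + ε) * ‖e + t • y‖ := mul_le_mul_of_nonneg_left hB (by positivity)
  · -- r > 2A : ‖e + t•y‖ ≥ r - |t| ≥ A
    have htri : r ≤ ‖e + t • y‖ + |t| := by
      have h1 : r = ‖(e + t • y) + (-(t • y))‖ := by simp [hr_def]
      have h2 := norm_add_le (e + t • y) (-(t • y))
      rw [← h1] at h2
      have h3 : ‖-(t • y)‖ = |t| := by simp [norm_smul, hy1]
      linarith
    have htA : |t| ≤ A := by
      have := abs_nonneg (f e)
      simp only [hA_def]; linarith
    have h10 : 0 ≤ ε * ‖e + t • y‖ := mul_nonneg hε.le (norm_nonneg _)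
    have h11 : (1 + ε) * ‖e + t • y‖ = ‖e + t • y‖ + ε * ‖e + t • y‖ := by ring
    linarith


set_option maxHeartbeats 1000000 in
theorem statement11 (X : Type*) [NormedAddCommGroup X] [NormedSpace ℝ X] [CompleteSpace X] :
    IsWeaklyOctahedral X ↔
      ∀ E : Submodule ℝ X, FiniteDimensional ℝ E →
        ∀ f : X →L[ℝ] ℝ, ‖f‖ ≤ 1 → ∀ ε : ℝ, 0 < ε →
          ∃ (y : X) (f₁ f₂ : X →L[ℝ] ℝ), ‖y‖ = 1 ∧
            ‖f₁‖ ≤ 1 + ε ∧ ‖f₂‖ ≤ 1 + ε ∧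
            (∀ e ∈ E, f₁ e = f e ∧ f₂ e = f e) ∧
            f₁ y - f₂ y > 2 - ε := by
  constructor
  · -- forward direction
    intro hW E hE f hf ε hε
    haveI := hE
    obtain ⟨y, hy1, hy⟩ := woh_key hW E f hf ε hε
    have hyE : y ∉ E := by
      intro hyE
      have h1 := hy (-y) (E.neg_mem hyE) 1
      have h0 : -y + (1 : ℝ) • y = 0 := by simp
      rw [h0, norm_zero, mul_zero] at h1
      have h2 := abs_nonneg (f (-y))
      have h3 : |(1 : ℝ)| = 1 := abs_one
      linarith
    set f₀ : X →ₗ.[ℝ] ℝ := ⟨E, (f : X →ₗ[ℝ] ℝ).domRestrict E⟩ with hf₀_def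
    have hyE' : y ∉ f₀.domain := hyE
    have build : ∀ c : ℝ, |c| ≤ 1 →
        ∃ g : X →L[ℝ] ℝ, ‖g‖ ≤ 1 + ε ∧ (∀ e ∈ E, g e = f e) ∧ g y = c := by
      intro c hc
      set gp := f₀.supSpanSingleton y c hyE' with hgp_def
      have hdom : gp.domain = E ⊔ ℝ ∙ y := rfl
      have hbound : ∀ x : gp.domain, gp x ≤ (1 + ε) * ‖(x : X)‖ := by
        rintro ⟨x, hx⟩
        have hx' : x ∈ E ⊔ ℝ ∙ y := hdom ▸ hx
        obtain ⟨e, he, w, hw, hew⟩ := Submodule.mem_sup.mp hx'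
        obtain ⟨a, rfl⟩ := Submodule.mem_span_singleton.mp hw
        have h1 := LinearPMap.supSpanSingleton_apply_mk f₀ y c hyE' e he a
        have hxe : (⟨x, hx⟩ : gp.domain) =
            ⟨e + a • y, Submodule.mem_sup.2 ⟨e, he, _,
              Submodule.mem_span_singleton.2 ⟨a, rfl⟩, rfl⟩⟩ := Subtype.ext hew.symm
        rw [hxe, h1]
        have hf₀e : f₀ ⟨e, he⟩ = f e := rfl
        rw [hf₀e, smul_eq_mul]
        have hac : |a * c| ≤ |a| := by
          rw [abs_mul]
          nlinarith [abs_nonneg a]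
        have h2 := le_abs_self (f e)
        have h3 := le_abs_self (a * c)
        have h4 := hy e he a
        have h5 : (⟨e + a • y, Submodule.mem_sup.2 ⟨e, he, _,
            Submodule.mem_span_singleton.2 ⟨a, rfl⟩, rfl⟩⟩ : gp.domain).val = e + a • y := rfl
        rw [h5]
        simp only [RingHom.id_apply]
        linarith
      obtain ⟨g, hg_eq, hg_le⟩ := exists_extension_of_le_sublinear gp (fun x => (1 + ε) * ‖x‖)
        (fun c' hc' x => by
          show (1 + ε) * ‖c' • x‖ = c' * ((1 + ε) * ‖x‖)
          rw [norm_smul, Real.norm_eq_abs, abs_of_pos hc']; ring)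
        (fun x y' => by
          show (1 + ε) * ‖x + y'‖ ≤ (1 + ε) * ‖x‖ + (1 + ε) * ‖y'‖
          have h := mul_le_mul_of_nonneg_left (norm_add_le x y') (by positivity : (0:ℝ) ≤ 1 + ε)
          linarith)
        hbound
      have habs : ∀ x, ‖g x‖ ≤ (1 + ε) * ‖x‖ := by
        intro x
        rw [Real.norm_eq_abs, abs_le]
        refine ⟨?_, hg_le x⟩
        have := hg_le (-x)
        rw [map_neg, norm_neg] at this
        linarith
      set G := g.mkContinuous (1 + ε) habs with hG_def
      have hGnorm : ‖G‖ ≤ 1 + ε := g.mkContinuous_norm_le (by positivity) habs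
      have hGapp : ∀ x, G x = g x := fun x => rfl
      refine ⟨G, hGnorm, ?_, ?_⟩
      · intro e he
        have heE : e ∈ gp.domain := by rw [hdom]; exact Submodule.mem_sup_left he
        have h1 := hg_eq ⟨e, heE⟩
        have h2 := LinearPMap.supSpanSingleton_apply_mk f₀ y c hyE' e he 0
        have hxe : (⟨e, heE⟩ : gp.domain) =
            ⟨e + (0:ℝ) • y, Submodule.mem_sup.2 ⟨e, he, _,
              Submodule.mem_span_singleton.2 ⟨0, rfl⟩, rfl⟩⟩ := Subtype.ext (by simp)
        rw [hGapp, h1, hxe, h2]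
        have : f₀ ⟨e, he⟩ = f e := rfl
        rw [this]; simp
      · have hyd : y ∈ gp.domain := by
          rw [hdom]; exact Submodule.mem_sup_right (Submodule.mem_span_singleton_self y)
        have h1 := hg_eq ⟨y, hyd⟩
        have h2 := LinearPMap.supSpanSingleton_apply_mk f₀ y c hyE' 0 E.zero_mem 1
        have hxe : (⟨y, hyd⟩ : gp.domain) =
            ⟨0 + (1:ℝ) • y, Submodule.mem_sup.2 ⟨0, E.zero_mem, _,
              Submodule.mem_span_singleton.2 ⟨1, rfl⟩, rfl⟩⟩ := Subtype.ext (by simp)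
        rw [hGapp, h1, hxe, h2]
        have : f₀ ⟨0, E.zero_mem⟩ = 0 := by
          have h0 : (⟨0, E.zero_mem⟩ : E) = 0 := rfl
          rw [h0]; exact map_zero f₀.toFun
        rw [this]; simp
    obtain ⟨f₁, hf₁n, hf₁E, hf₁y⟩ := build 1 (by simp)
    obtain ⟨f₂, hf₂n, hf₂E, hf₂y⟩ := build (-1) (by simp)
    exact ⟨y, f₁, f₂, hy1, hf₁n, hf₂n, fun e he => ⟨hf₁E e he, hf₂E e he⟩, by
      rw [hf₁y, hf₂y]; linarith⟩
  · -- reverse direction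
    intro h n z hz f hf ε hε
    obtain ⟨ε', hε', hε'4, hε'1⟩ : ∃ ε' : ℝ, 0 < ε' ∧ ε' ≤ ε / 4 ∧ ε' ≤ 1 / 4 :=
      ⟨min (ε / 4) (1 / 4), lt_min (by linarith) (by norm_num),
        min_le_left _ _, min_le_right _ _⟩
    set E := Submodule.span ℝ (Set.range z) with hE_def
    haveI : FiniteDimensional ℝ E := FiniteDimensional.span_of_finite ℝ (Set.finite_range z)
    obtain ⟨y, f₁, f₂, hy1, hf₁n, hf₂n, hEeq, hsep⟩ := h E this f hf ε' hε'
    have hb : ∀ (g : X →L[ℝ] ℝ), ‖g‖ ≤ 1 + ε' → ∀ v : X, |g v| ≤ (1 + ε') * ‖v‖ := by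
      intro g hg v
      calc |g v| = ‖g v‖ := (Real.norm_eq_abs _).symm
        _ ≤ ‖g‖ * ‖v‖ := g.le_opNorm v
        _ ≤ (1 + ε') * ‖v‖ := mul_le_mul_of_nonneg_right hg (norm_nonneg v)
    have hf₁y : f₁ y > 1 - 2 * ε' := by
      have h2 := hb f₂ hf₂n y
      rw [hy1, mul_one, abs_le] at h2
      linarith
    have hf₂y : f₂ y < -(1 - 2 * ε') := by
      have h1 := hb f₁ hf₁n y
      rw [hy1, mul_one, abs_le] at h1
      linarith
    refine ⟨y, hy1, ?_⟩
    intro i t ht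
    have hziE : z i ∈ E := Submodule.subset_span (Set.mem_range_self i)
    have hf₁z : f₁ (z i) = f (z i) := (hEeq (z i) hziE).1
    have hf₂z : f₂ (z i) = f (z i) := (hEeq (z i) hziE).2
    set a := f (z i) with ha_def
    have hcoef : (1 - ε) * (1 + ε') * (|a| + t) ≤ |a| + t * (1 - 2 * ε') := by
      nlinarith [abs_nonneg a, mul_nonneg hε.le (abs_nonneg a), mul_pos hε ht,
        mul_nonneg hε'.le (abs_nonneg a), mul_pos hε' ht, mul_pos (mul_pos hε hε') ht,
        mul_nonneg (mul_nonneg hε.le hε'.le) (abs_nonneg a)]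
    have key : ∀ v : X, |a| + t * (1 - 2 * ε') ≤ (1 + ε') * ‖v‖ →
        (1 - ε) * (|a| + t) ≤ ‖v‖ := by
      intro v hv
      have h1 : (1 - ε) * (1 + ε') * (|a| + t) ≤ (1 + ε') * ‖v‖ := le_trans hcoef hv
      nlinarith [hε']
    constructor
    · -- ‖z i + t • y‖
      rcases le_or_gt 0 a with hapos | haneg
      · apply key
        have h1 : f₁ (z i + t • y) ≤ |f₁ (z i + t • y)| := le_abs_self _
        have h2 := hb f₁ hf₁n (z i + t • y)
        have h3 : f₁ (z i + t • y) = a + t * f₁ y := by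
          rw [map_add, map_smul, hf₁z, smul_eq_mul]
        have h4 : t * (1 - 2 * ε') ≤ t * f₁ y :=
          mul_le_mul_of_nonneg_left hf₁y.le ht.le
        rw [abs_of_nonneg hapos]
        linarith
      · apply key
        have h1 : -f₂ (z i + t • y) ≤ |f₂ (z i + t • y)| := neg_le_abs _
        have h2 := hb f₂ hf₂n (z i + t • y)
        have h3 : f₂ (z i + t • y) = a + t * f₂ y := by
          rw [map_add, map_smul, hf₂z, smul_eq_mul]
        have h4 : t * (1 - 2 * ε') ≤ t * (-f₂ y) := by
          apply mul_le_mul_of_nonneg_left _ ht.le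
          linarith
        rw [abs_of_neg haneg]
        linarith
    · -- ‖z i - t • y‖
      rcases le_or_gt 0 a with hapos | haneg
      · apply key
        have h1 : f₂ (z i - t • y) ≤ |f₂ (z i - t • y)| := le_abs_self _
        have h2 := hb f₂ hf₂n (z i - t • y)
        have h3 : f₂ (z i - t • y) = a - t * f₂ y := by
          rw [map_sub, map_smul, hf₂z, smul_eq_mul]
        have h4 : t * (1 - 2 * ε') ≤ t * (-f₂ y) := by
          apply mul_le_mul_of_nonneg_left _ ht.le
          linarith
        rw [abs_of_nonneg hapos]
        linarith
      · apply key
        have h1 : -f₁ (z i - t • y) ≤ |f₁ (z i - t • y)| := neg_le_abs _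
        have h2 := hb f₁ hf₁n (z i - t • y)
        have h3 : f₁ (z i - t • y) = a - t * f₁ y := by
          rw [map_sub, map_smul, hf₁z, smul_eq_mul]
        have h4 : t * (1 - 2 * ε') ≤ t * f₁ y :=
          mul_le_mul_of_nonneg_left hf₁y.le ht.le
        rw [abs_of_neg haneg]
        linarith
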